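/- arXiv:2003.04782 — 4 statements merged into one kernel-verified Lean document; each statement's English description precedes it below -/
import Mathlib

section
/- Let f be a measurable function on a set Q of finite positive measure and let m_f(Q) be any median of f on Q. Then for every 0 < λ < 1/2, |m_f(Q)| ≤ (fχ_Q)*(λ|Q|). -/
open MeasureTheory ENNReal

noncomputable section

/-- The decreasing rearrangement of `f` with respect to a measure `μ`:
`f*(t) = inf {α ≥ 0 : μ{|f| > α} ≤ t}`, with `inf ∅ = ∞`. -/
def rearrangement {α : Type*} [MeasurableSpace α] (μ : Measure α) (f : α → ℝ)
    (t : ℝ≥0∞) : ℝ≥0∞ :=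
  sInf {a : ℝ≥0∞ | μ {x | a < ENNReal.ofReal |f x|} ≤ t}

/-- if `m` is a median of `f` on `Q`, then for every `0 < λ < 1/2`,
`|m| ≤ (fχ_Q)*(λ|Q|)`. -/
theorem abs_median_le_rearrangement (n : ℕ) (Q : Set (Fin n → ℝ))
    (hQ : MeasurableSet Q) (hQ0 : 0 < volume Q) (hQfin : volume Q < ∞)
    (f : (Fin n → ℝ) → ℝ) (hf : Measurable f) (m : ℝ)
    (hm_gt : volume {x | x ∈ Q ∧ m < f x} ≤ volume Q / 2)
    (hm_lt : volume {x | x ∈ Q ∧ f x < m} ≤ volume Q / 2)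
    (lam : ℝ) (hlam0 : 0 < lam) (hlam1 : lam < 1 / 2) :
    ENNReal.ofReal |m| ≤
      rearrangement volume (Q.indicator f) (ENNReal.ofReal lam * volume Q) := by
  apply le_sInf
  intro a ha
  simp only [Set.mem_setOf_eq] at ha
  by_contra hcon
  push_neg at hcon
  -- the set where |f| ≥ |m| inside Q is contained in the level set
  have hsub : {x | x ∈ Q ∧ |m| ≤ |f x|} ⊆ {x | a < ENNReal.ofReal |Q.indicator f x|} := by
    intro x ⟨hxQ, hx⟩
    simp only [Set.mem_setOf_eq, Set.indicator_of_mem hxQ]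
    exact lt_of_lt_of_le hcon (ENNReal.ofReal_le_ofReal hx)
  -- the complement within Q has measure ≤ vol Q / 2
  have hB : volume {x | x ∈ Q ∧ |f x| < |m|} ≤ volume Q / 2 := by
    rcases le_or_gt 0 m with hm | hm
    · refine le_trans (measure_mono ?_) hm_lt
      intro x ⟨hxQ, hx⟩
      refine ⟨hxQ, ?_⟩
      have : |f x| < m := by rwa [abs_of_nonneg hm] at hx
      exact lt_of_le_of_lt (le_abs_self _) this
    · refine le_trans (measure_mono ?_) hm_gt
      intro x ⟨hxQ, hx⟩
      refine ⟨hxQ, ?_⟩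
      have : |f x| < -m := by rwa [abs_of_neg hm] at hx
      have := neg_lt_of_abs_lt this
      linarith
  have hcover : Q ⊆ {x | x ∈ Q ∧ |m| ≤ |f x|} ∪ {x | x ∈ Q ∧ |f x| < |m|} := by
    intro x hx
    rcases le_or_gt |m| |f x| with h | h
    · exact Or.inl ⟨hx, h⟩
    · exact Or.inr ⟨hx, h⟩
  have hhalf : volume Q / 2 ≤ volume {x | x ∈ Q ∧ |m| ≤ |f x|} := by
    have h1 : volume Q ≤ volume {x | x ∈ Q ∧ |m| ≤ |f x|} + volume Q / 2 :=
      le_trans (measure_mono hcover) (le_trans (measure_union_le _ _) (by gcongr))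
    calc volume Q / 2 = volume Q - volume Q / 2 := (ENNReal.sub_half hQfin.ne).symm
      _ ≤ volume {x | x ∈ Q ∧ |m| ≤ |f x|} := tsub_le_iff_right.mpr h1
  have hlt : ENNReal.ofReal lam * volume Q < volume Q / 2 := by
    have : ENNReal.ofReal lam < ENNReal.ofReal (1/2) :=
      (ENNReal.ofReal_lt_ofReal_iff (by norm_num)).mpr hlam1
    calc ENNReal.ofReal lam * volume Q < ENNReal.ofReal (1/2) * volume Q := by
          rw [mul_comm _ (volume Q), mul_comm _ (volume Q)]; exact ENNReal.mul_lt_mul_right hQ0.ne' hQfin.ne this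
      _ = volume Q / 2 := by
          rw [ENNReal.ofReal_div_of_pos (by norm_num), ENNReal.ofReal_one,
            ENNReal.ofReal_ofNat, ENNReal.div_eq_inv_mul (a := volume Q),
            one_div]
  have : volume Q / 2 ≤ ENNReal.ofReal lam * volume Q :=
    le_trans hhalf (le_trans (measure_mono hsub) ha)
  exact absurd this (not_le.mpr hlt)
end
end

section
/- Let S be a (1/2)-sparse family of cubes in ℝⁿ and s ≥ 1. If f ∈ L^p with p > s, then the sparse operator A^s_S f(x) = Σ_{Q ∈ S} ⟨f⟩_{s,Q} χ_Q(x) satisfies ‖A^s_S f‖_{L^p} ≤ C(n, p, s) ‖f‖_{L^p}. -/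
open MeasureTheory ENNReal

noncomputable section

/-- An axis-parallel cube in ℝⁿ, given by its center and half side length. -/
structure Cube (n : ℕ) where
  c : Fin n → ℝ
  r : ℝ
  r_pos : 0 < r

/-- The set of points of a cube. -/
def Cube.set {n : ℕ} (Q : Cube n) : Set (Fin n → ℝ) :=
  {x | ∀ i, |x i - Q.c i| ≤ Q.r}

/-- The normalized `L^s` average `⟨f⟩_{s,Q} = ((1/|Q|) ∫_Q |f|^s)^{1/s}` on a cube. -/
def avg (n : ℕ) (s : ℝ) (f : (Fin n → ℝ) → ℂ) (Q : Cube n) : ℝ≥0∞ :=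
  ((volume Q.set)⁻¹ * ∫⁻ x in Q.set, (‖f x‖₊ : ℝ≥0∞) ^ s) ^ (1 / s)

/-- A family `S` of cubes is `η`-sparse if there exist pairwise disjoint measurable
sets `E_Q ⊆ Q` with `|E_Q| ≥ η |Q|` for each `Q ∈ S`. -/
def IsSparse (n : ℕ) (η : ℝ) (S : Set (Cube n)) : Prop :=
  ∃ E : Cube n → Set (Fin n → ℝ),
    (∀ Q ∈ S, E Q ⊆ Q.set ∧ MeasurableSet (E Q) ∧
      ENNReal.ofReal η * volume Q.set ≤ volume (E Q)) ∧
    S.PairwiseDisjoint E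

/-- The sparse operator `A^s_S f(x) = Σ_{Q ∈ S} ⟨f⟩_{s,Q} χ_Q(x)`. -/
def sparseOp (n : ℕ) (s : ℝ) (S : Set (Cube n)) (f : (Fin n → ℝ) → ℂ)
    (x : Fin n → ℝ) : ℝ≥0∞ :=
  ∑' Q : S, avg n s f Q * (Q : Cube n).set.indicator (fun _ => (1 : ℝ≥0∞)) x

section Aux
open Set

namespace Cube
variable {n : ℕ}

lemma set_eq_pi (Q : Cube n) : Q.set = Set.pi Set.univ (fun i => Icc (Q.c i - Q.r) (Q.c i + Q.r)) := by
  ext x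
  simp only [Cube.set, Set.mem_setOf_eq, Set.mem_pi, Set.mem_univ, forall_true_left, Set.mem_Icc,
    abs_sub_le_iff]
  constructor
  · intro h i; have := h i; constructor <;> linarith [this.1, this.2]
  · intro h i; have := h i; constructor <;> linarith [this.1, this.2]

lemma measurableSet (Q : Cube n) : MeasurableSet Q.set := by
  rw [set_eq_pi]
  exact MeasurableSet.univ_pi fun i => measurableSet_Icc

lemma volume_set (Q : Cube n) : volume Q.set = ENNReal.ofReal (2 * Q.r) ^ n := by
  rw [set_eq_pi, volume_pi_pi]
  simp [Real.volume_Icc]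
  ring_nf
  rw [ENNReal.ofReal_mul' (by norm_num), mul_pow, ENNReal.ofReal_ofNat]

lemma volume_pos (Q : Cube n) : 0 < volume Q.set := by
  rw [volume_set]
  apply ENNReal.pow_pos
  rw [ENNReal.ofReal_pos]
  linarith [Q.r_pos]

lemma volume_lt_top (Q : Cube n) : volume Q.set < ∞ := by
  rw [volume_set]
  exact ENNReal.pow_lt_top ofReal_lt_top

def dil3 (Q : Cube n) : Cube n := ⟨Q.c, 3 * Q.r, by linarith [Q.r_pos]⟩

lemma volume_dil3 (Q : Cube n) : volume (Q.dil3).set = 3 ^ n * volume Q.set := by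
  rw [volume_set, volume_set, dil3]
  simp only
  rw [show (2 : ℝ) * (3 * Q.r) = 3 * (2 * Q.r) by ring,
    ENNReal.ofReal_mul (by norm_num), mul_pow]
  norm_num

lemma subset_dil3 {Q0 Q : Cube n} (hr : Q.r ≤ Q0.r) (hint : (Q.set ∩ Q0.set).Nonempty) :
    Q.set ⊆ Q0.dil3.set := by
  obtain ⟨y, hyQ, hyQ0⟩ := hint
  intro x hx i
  have h1 := hx i
  have h2 := hyQ i
  have h3 := hyQ0 i
  simp only [dil3]
  have h4 : |x i - y i| ≤ |x i - Q.c i| + |Q.c i - y i| := abs_sub_le _ _ _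
  rw [abs_sub_comm (Q.c i) (y i)] at h4
  calc |x i - Q0.c i| ≤ |x i - y i| + |y i - Q0.c i| := abs_sub_le _ _ _
    _ ≤ (|x i - Q.c i| + |y i - Q.c i|) + |y i - Q0.c i| := by linarith
    _ ≤ 3 * Q0.r := by linarith

end Cube

variable {n : ℕ}

lemma Cube.center_mem (Q : Cube n) : Q.c ∈ Q.set := by
  intro i; simp [abs_of_nonneg]; linarith [Q.r_pos]

open Classical in
lemma vitali_finite (T : Finset (Cube n)) :
    ∃ D : Finset (Cube n), D ⊆ T ∧ (D : Set (Cube n)).PairwiseDisjoint Cube.set ∧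
      ∀ Q ∈ T, ∃ Q' ∈ D, Q.set ⊆ Q'.dil3.set := by
  induction T using Finset.strongInduction with
  | _ T ih =>
    rcases T.eq_empty_or_nonempty with rfl | hne
    · exact ⟨∅, by simp, by simp, by simp⟩
    obtain ⟨Q0, hQ0T, hmax⟩ := T.exists_max_image (fun Q => Q.r) hne
    set T' := T.filter (fun Q => Q.set ∩ Q0.set = ∅) with hT'
    have hQ0T' : Q0 ∉ T' := by
      simp only [hT', Finset.mem_filter]
      rintro ⟨-, h⟩
      exact absurd h (by rw [Set.inter_self]; exact Set.Nonempty.ne_empty ⟨Q0.c, Q0.center_mem⟩)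
    have hss : T' ⊂ T := ⟨Finset.filter_subset _ _, fun h => hQ0T' (h hQ0T)⟩
    obtain ⟨D', hD'T', hdisj, hcov⟩ := ih T' hss
    refine ⟨insert Q0 D', Finset.insert_subset hQ0T (hD'T'.trans (Finset.filter_subset _ _)), ?_, ?_⟩
    · rw [Finset.coe_insert]
      refine Set.PairwiseDisjoint.insert hdisj fun Q hQ _ => ?_
      have : Q.set ∩ Q0.set = ∅ := (Finset.mem_filter.mp (hD'T' hQ)).2
      exact (Set.disjoint_iff_inter_eq_empty.mpr this).symm
    · intro Q hQ
      by_cases hcap : Q.set ∩ Q0.set = ∅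
      · obtain ⟨Q', hQ', hsub⟩ := hcov Q (Finset.mem_filter.mpr ⟨hQ, hcap⟩)
        exact ⟨Q', Finset.mem_insert_of_mem hQ', hsub⟩
      · refine ⟨Q0, Finset.mem_insert_self _ _, Cube.subset_dil3 (hmax Q hQ) ?_⟩
        exact Set.nonempty_iff_ne_empty.mpr hcap

abbrev XX (n : ℕ) := Fin n → ℝ

def cavg {n : ℕ} (φ : XX n → ℝ≥0∞) (Q : Cube n) : ℝ≥0∞ :=
  (volume Q.set)⁻¹ * ∫⁻ x in Q.set, φ x

def maxOp {n : ℕ} (T : Finset (Cube n)) (φ : XX n → ℝ≥0∞) (x : XX n) : ℝ≥0∞ :=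
  T.sup fun Q => Q.set.indicator (fun _ => cavg φ Q) x

lemma measurable_maxOp (T : Finset (Cube n)) (φ : XX n → ℝ≥0∞) :
    Measurable (fun x => maxOp T φ x) := by
  classical
  induction T using Finset.induction with
  | empty => simp only [maxOp, Finset.sup_empty]; exact measurable_const
  | insert _ _ hQ ih =>
    simp only [maxOp, Finset.sup_insert]
    exact Measurable.sup (measurable_const.indicator (Cube.measurableSet _)) ih

lemma lt_maxOp_iff {T : Finset (Cube n)} {φ : XX n → ℝ≥0∞} {x : XX n} {L : ℝ≥0∞} :
    L < maxOp T φ x ↔ ∃ Q ∈ T, x ∈ Q.set ∧ L < cavg φ Q := by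
  rw [maxOp, Finset.lt_sup_iff]
  constructor
  · rintro ⟨Q, hQ, hlt⟩
    by_cases hx : x ∈ Q.set
    · exact ⟨Q, hQ, hx, by rwa [Set.indicator_of_mem hx] at hlt⟩
    · rw [Set.indicator_of_notMem hx] at hlt; exact absurd hlt (by simp)
  · rintro ⟨Q, hQ, hx, hlt⟩
    exact ⟨Q, hQ, by rwa [Set.indicator_of_mem hx]⟩

lemma cavg_le_maxOp {T : Finset (Cube n)} {φ : XX n → ℝ≥0∞} {x : XX n} {Q : Cube n}
    (hQ : Q ∈ T) (hx : x ∈ Q.set) : cavg φ Q ≤ maxOp T φ x := by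
  refine le_trans ?_ (Finset.le_sup hQ)
  rw [Set.indicator_of_mem hx]

lemma maxOp_lt_top {T : Finset (Cube n)} {φ : XX n → ℝ≥0∞}
    (hfin : ∀ Q ∈ T, cavg φ Q ≠ ∞) (x : XX n) : maxOp T φ x < ∞ := by
  rw [maxOp, Finset.sup_lt_iff (by simp : (⊥ : ℝ≥0∞) < ∞)]
  intro Q hQ
  exact lt_of_le_of_lt (Set.indicator_le_self _ _ x) (lt_top_iff_ne_top.mpr (hfin Q hQ))

/-- Key per-cube estimate with truncation. -/
lemma cube_vol_le {Q : Cube n} {φ : XX n → ℝ≥0∞} (hφ : Measurable φ)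
    {L : ℝ≥0∞} (hL0 : L ≠ 0) (hLt : L ≠ ∞) (h : L < cavg φ Q) :
    volume Q.set ≤ 2 * L⁻¹ * ∫⁻ x in {y | L / 2 < φ y} ∩ Q.set, φ x := by
  set v := volume Q.set with hv
  set A := {y | L / 2 < φ y} with hA
  have hAm : MeasurableSet A := measurableSet_lt measurable_const hφ
  set J := ∫⁻ x in A ∩ Q.set, φ x with hJ
  have hv0 : v ≠ 0 := (Cube.volume_pos Q).ne'
  have hvt : v ≠ ∞ := (Cube.volume_lt_top Q).ne
  have hcore : L * v < ∫⁻ x in Q.set, φ x := by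
    have h2 := (ENNReal.mul_lt_mul_iff_right hv0 hvt).mpr h
    simp only [cavg] at h2
    rwa [← mul_assoc, ENNReal.mul_inv_cancel hv0 hvt, one_mul, mul_comm v L] at h2
  have hsplit : ∫⁻ x in Q.set, φ x ≤ J + L / 2 * v := by
    have hpt : ∀ x, φ x ≤ A.indicator φ x + L / 2 := by
      intro x
      by_cases hx : x ∈ A
      · rw [Set.indicator_of_mem hx]; exact le_self_add
      · rw [Set.indicator_of_notMem hx, zero_add]
        exact le_of_not_gt (by simpa [hA] using hx)
    calc ∫⁻ x in Q.set, φ x ≤ ∫⁻ x in Q.set, (A.indicator φ x + L / 2) :=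
          lintegral_mono fun x => hpt x
      _ = (∫⁻ x in Q.set, A.indicator φ x) + L / 2 * v := by
          rw [lintegral_add_right _ measurable_const, setLIntegral_const, hv]
      _ = J + L / 2 * v := by
          rw [setLIntegral_indicator hAm]
  have hhalf : L / 2 * v ≤ J := by
    have h1 : L * v ≤ J + L / 2 * v := le_trans hcore.le hsplit
    have h2 : L * v - L / 2 * v ≤ J := tsub_le_iff_right.mpr h1
    have h3 : L * v - L / 2 * v = (L - L / 2) * v := by
      rw [ENNReal.sub_mul fun _ _ => hvt]
    rwa [h3, ENNReal.sub_half hLt] at h2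
  have hL20 : L / 2 ≠ 0 := by
    simp [ENNReal.div_eq_zero_iff, hL0]
  have hL2t : L / 2 ≠ ∞ := by
    simp [ENNReal.div_eq_top, hLt]
  have : v ≤ (L / 2)⁻¹ * J := by
    calc v = (L / 2)⁻¹ * (L / 2 * v) := by
          rw [← mul_assoc, ENNReal.inv_mul_cancel hL20 hL2t, one_mul]
      _ ≤ (L / 2)⁻¹ * J := mul_le_mul_right hhalf _
  rwa [ENNReal.inv_div (Or.inl (by simp)) (Or.inl (by simp)), div_eq_mul_inv] at this

open Classical in
lemma weak_type (T : Finset (Cube n)) {φ : XX n → ℝ≥0∞} (hφ : Measurable φ)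
    {L : ℝ≥0∞} (hL0 : L ≠ 0) (hLt : L ≠ ∞) :
    volume {x | L < maxOp T φ x}
      ≤ 2 * 3 ^ n * L⁻¹ * ∫⁻ x in {y | L / 2 < φ y}, φ x := by
  set A := {y | L / 2 < φ y} with hA
  have hAm : MeasurableSet A := measurableSet_lt measurable_const hφ
  set T' := T.filter (fun Q => L < cavg φ Q) with hT'
  have hset : {x | L < maxOp T φ x} = ⋃ Q ∈ T', Q.set := by
    ext x
    simp only [Set.mem_setOf_eq, lt_maxOp_iff, Set.mem_iUnion, hT', Finset.mem_filter]
    tauto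
  obtain ⟨D, hDT', hdisj, hcov⟩ := vitali_finite T'
  have hsub : {x | L < maxOp T φ x} ⊆ ⋃ Q ∈ D, Q.dil3.set := by
    rw [hset]
    refine Set.iUnion₂_subset fun Q hQ => ?_
    obtain ⟨Q', hQ', hss⟩ := hcov Q hQ
    exact hss.trans (Set.subset_iUnion₂ (s := fun Q _ => Q.dil3.set) Q' hQ')
  calc volume {x | L < maxOp T φ x} ≤ volume (⋃ Q ∈ D, Q.dil3.set) := measure_mono hsub
    _ ≤ ∑ Q ∈ D, volume Q.dil3.set := measure_biUnion_finset_le D _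
    _ = ∑ Q ∈ D, 3 ^ n * volume Q.set := by
        refine Finset.sum_congr rfl fun Q _ => Cube.volume_dil3 Q
    _ ≤ ∑ Q ∈ D, 3 ^ n * (2 * L⁻¹ * ∫⁻ x in A ∩ Q.set, φ x) := by
        refine Finset.sum_le_sum fun Q hQ => ?_
        have hQT' : Q ∈ T' := hDT' hQ
        have hcavg : L < cavg φ Q := (Finset.mem_filter.mp hQT').2
        exact mul_le_mul_right (cube_vol_le hφ hL0 hLt hcavg) _
    _ = 2 * 3 ^ n * L⁻¹ * ∑ Q ∈ D, ∫⁻ x in A ∩ Q.set, φ x := by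
        rw [Finset.mul_sum]
        refine Finset.sum_congr rfl fun Q _ => by ring
    _ = 2 * 3 ^ n * L⁻¹ * ∫⁻ x in ⋃ Q ∈ D, (A ∩ Q.set), φ x := by
        rw [lintegral_biUnion_finset (hdisj.mono fun Q => Set.inter_subset_right)
          (fun Q _ => hAm.inter Q.measurableSet)]
    _ ≤ 2 * 3 ^ n * L⁻¹ * ∫⁻ x in A, φ x := by
        refine mul_le_mul_right (lintegral_mono_set ?_) _
        exact Set.iUnion₂_subset fun Q _ => Set.inter_subset_left

lemma strong_type (T : Finset (Cube n)) {φ : XX n → ℝ≥0∞} (hφ : Measurable φ)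
    {q : ℝ} (hq : 1 < q) (hfin : ∀ Q ∈ T, cavg φ Q ≠ ∞) :
    ∫⁻ x, maxOp T φ x ^ q
      ≤ 2 * 3 ^ n * (ENNReal.ofReal (q / (q - 1)) * 2 ^ (q - 1)) * ∫⁻ x, φ x ^ q := by
  have hq0 : (0:ℝ) < q := by linarith
  set h := fun x => maxOp T φ x with hh
  have hmeas : Measurable h := measurable_maxOp T φ
  have hlt : ∀ x, h x ≠ ∞ := fun x => (maxOp_lt_top hfin x).ne
  set w : ℝ → ℝ≥0∞ := fun t => (ENNReal.ofReal t)⁻¹ * ENNReal.ofReal (q * t ^ (q - 1)) with hw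
  have hwmeas : Measurable w := by
    exact (ENNReal.measurable_ofReal.inv).mul
      (ENNReal.measurable_ofReal.comp ((measurable_id.pow_const (q-1)).const_mul q))
  set F : ℝ → XX n → ℝ≥0∞ :=
    fun t x => w t * if ENNReal.ofReal t < φ x * 2 then φ x else 0 with hF
  have hFmeas : Measurable (Function.uncurry F) := by
    refine ((hwmeas.comp measurable_fst)).mul ?_
    refine Measurable.ite ?_ (hφ.comp measurable_snd) measurable_const
    exact measurableSet_lt (ENNReal.measurable_ofReal.comp measurable_fst)
      ((hφ.comp measurable_snd).mul measurable_const)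
  -- step 1: pointwise identity
  have step1 : ∀ x, h x ^ q = ENNReal.ofReal (∫ t in (0:ℝ)..(h x).toReal, q * t ^ (q - 1)) := by
    intro x
    have ha : 0 ≤ (h x).toReal := ENNReal.toReal_nonneg
    have hint : ∫ t in (0:ℝ)..(h x).toReal, q * t ^ (q-1) = (h x).toReal ^ q := by
      rw [intervalIntegral.integral_const_mul, integral_rpow (Or.inl (by linarith : (-1:ℝ) < q - 1))]
      rw [show q - 1 + 1 = q by ring, Real.zero_rpow (ne_of_gt hq0), sub_zero]
      field_simp
    rw [hint, ← ENNReal.ofReal_rpow_of_nonneg ha (le_of_lt hq0), ENNReal.ofReal_toReal (hlt x)]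
  -- step 2: layer cake
  have step2 : ∫⁻ x, h x ^ q
      = ∫⁻ t in Set.Ioi (0:ℝ),
          volume {x | t < (h x).toReal} * ENNReal.ofReal (q * t ^ (q - 1)) := by
    rw [lintegral_congr step1]
    exact lintegral_comp_eq_lintegral_meas_lt_mul volume
      (Filter.Eventually.of_forall fun x => ENNReal.toReal_nonneg)
      (hmeas.ennreal_toReal).aemeasurable
      (fun t ht => (intervalIntegral.intervalIntegrable_rpow' (by linarith)).const_mul q)
      ((ae_restrict_iff' measurableSet_Ioi).mpr (Filter.Eventually.of_forall fun t ht =>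
        mul_nonneg (le_of_lt hq0) (Real.rpow_nonneg (le_of_lt ht) _)))
  -- step 3 : weak type bound
  have meas_eq : ∀ t : ℝ, 0 < t → {x | t < (h x).toReal} = {x | ENNReal.ofReal t < h x} := by
    intro t ht
    ext x
    simp only [Set.mem_setOf_eq]
    rw [ENNReal.ofReal_lt_iff_lt_toReal ht.le (hlt x)]
  have step3 : ∫⁻ t in Set.Ioi (0:ℝ),
        volume {x | t < (h x).toReal} * ENNReal.ofReal (q * t ^ (q - 1))
      ≤ ∫⁻ t in Set.Ioi (0:ℝ), 2 * 3 ^ n * ∫⁻ x, F t x := by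
    refine setLIntegral_mono' measurableSet_Ioi fun t ht => ?_
    replace ht : (0:ℝ) < t := ht
    have h1 : volume {x | t < (h x).toReal}
        ≤ 2 * 3 ^ n * (ENNReal.ofReal t)⁻¹ * ∫⁻ x in {y | ENNReal.ofReal t / 2 < φ y}, φ x := by
      rw [meas_eq t ht]
      exact weak_type T hφ ((ENNReal.ofReal_pos.mpr ht).ne') ENNReal.ofReal_ne_top
    have hset : {y | ENNReal.ofReal t / 2 < φ y} = {y | ENNReal.ofReal t < φ y * 2} := by
      ext y
      simp only [Set.mem_setOf_eq]
      rw [ENNReal.div_lt_iff (Or.inl (by norm_num)) (Or.inl (by norm_num))]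
    have h2 : ∫⁻ x, F t x
        = w t * ∫⁻ x in {y | ENNReal.ofReal t / 2 < φ y}, φ x := by
      rw [hF]
      simp only
      rw [lintegral_const_mul _ (Measurable.ite (measurableSet_lt measurable_const
        (hφ.mul_const 2)) hφ measurable_const)]
      congr 1
      rw [hset, ← lintegral_indicator (measurableSet_lt measurable_const
        (hφ.mul_const 2))]
      congr 1
      ext x
      rw [Set.indicator_apply]
      simp [Set.mem_setOf_eq]
    calc volume {x | t < (h x).toReal} * ENNReal.ofReal (q * t ^ (q - 1))
        ≤ (2 * 3 ^ n * (ENNReal.ofReal t)⁻¹ * ∫⁻ x in {y | ENNReal.ofReal t / 2 < φ y}, φ x)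
            * ENNReal.ofReal (q * t ^ (q - 1)) := mul_le_mul_left h1 _
      _ = 2 * 3 ^ n * ∫⁻ x, F t x := by
          rw [h2]
          simp only [hw]
          ring
  -- step 4 : swap
  have step4 : ∫⁻ t in Set.Ioi (0:ℝ), 2 * 3 ^ n * ∫⁻ x, F t x
      = 2 * 3 ^ n * ∫⁻ x, ∫⁻ t in Set.Ioi (0:ℝ), F t x := by
    rw [lintegral_const_mul]
    · rw [lintegral_lintegral_swap hFmeas.aemeasurable]
    · exact hFmeas.lintegral_prod_right'
  -- step 5 : pointwise inner bound
  have step5 : ∀ x, ∫⁻ t in Set.Ioi (0:ℝ), F t x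
      ≤ ENNReal.ofReal (q / (q - 1)) * 2 ^ (q - 1) * φ x ^ q := by
    intro x
    rcases eq_or_ne (φ x) 0 with h0 | h0
    · have : ∀ t, F t x = 0 := by
        intro t
        rw [hF]
        simp [h0]
      simp [this]
    rcases eq_or_ne (φ x) ∞ with htop | htop
    · have : φ x ^ q = ∞ := by rw [htop]; exact ENNReal.top_rpow_of_pos hq0
      rw [this]
      rw [ENNReal.mul_top]
      · exact le_top
      · refine mul_ne_zero ?_ ?_
        · rw [Ne, ENNReal.ofReal_eq_zero, not_le]
          exact div_pos hq0 (by linarith)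
        · exact (ENNReal.rpow_pos (by norm_num) (by norm_num)).ne'
    -- main case
    set a := (φ x * 2).toReal with hadef
    have h2top : φ x * 2 ≠ ∞ := ENNReal.mul_ne_top htop (by norm_num)
    have ha : 0 < a := ENNReal.toReal_pos (by simp [h0]) h2top
    have hcond : ∀ t : ℝ, 0 ≤ t → (ENNReal.ofReal t < φ x * 2 ↔ t < a) :=
      fun t htt => ENNReal.ofReal_lt_iff_lt_toReal htt h2top
    have key : ∫⁻ t in Set.Ioi (0:ℝ), F t x = (∫⁻ t in Set.Ioo 0 a, w t) * φ x := by
      have : ∀ t ∈ Set.Ioi (0:ℝ), F t x = (Set.Ioo 0 a).indicator (fun t => w t * φ x) t := by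
        intro t ht
        replace ht : (0:ℝ) < t := ht
        rw [hF]
        simp only
        by_cases hta : t < a
        · rw [if_pos ((hcond t ht.le).mpr hta), Set.indicator_of_mem (Set.mem_Ioo.mpr ⟨ht, hta⟩)]
        · rw [if_neg (fun hc => hta ((hcond t ht.le).mp hc)),
            Set.indicator_of_notMem (fun hm => hta (Set.mem_Ioo.mp hm).2), mul_zero]
      rw [setLIntegral_congr_fun measurableSet_Ioi this]
      rw [setLIntegral_indicator measurableSet_Ioo]
      rw [Set.inter_eq_self_of_subset_left (fun t ht => ht.1)]
      exact lintegral_mul_const _ hwmeas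
    have wcalc : ∫⁻ t in Set.Ioo 0 a, w t = ENNReal.ofReal (q / (q - 1) * a ^ (q - 1)) := by
      have hcong : ∀ t ∈ Set.Ioo (0:ℝ) a, w t = ENNReal.ofReal (q * t ^ (q - 2)) := by
        intro t ht
        have ht0 : (0:ℝ) < t := ht.1
        rw [hw]
        simp only
        have h21 : t ^ (q - 1) = t ^ (q - 2) * t := by
          rw [show q - 1 = q - 2 + 1 by ring, Real.rpow_add_one ht0.ne']
        have : q * t ^ (q - 1) = q * t ^ (q - 2) * t := by rw [h21]; ring
        rw [this, ENNReal.ofReal_mul (by positivity), mul_comm (ENNReal.ofReal (q * t ^ (q-2))),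
          ← mul_assoc, ENNReal.inv_mul_cancel (ENNReal.ofReal_pos.mpr ht0).ne'
            ENNReal.ofReal_ne_top, one_mul]
      rw [setLIntegral_congr_fun measurableSet_Ioo hcong]
      have hintg : IntegrableOn (fun t => q * t ^ (q - 2)) (Set.Ioo 0 a) volume := by
        have := (intervalIntegral.intervalIntegrable_rpow' (by linarith : (-1:ℝ) < q - 2)).const_mul q (a := 0) (b := a)
        rw [intervalIntegrable_iff, Set.uIoc_of_le ha.le] at this
        exact this.mono_set Set.Ioo_subset_Ioc_self
      rw [← MeasureTheory.ofReal_integral_eq_lintegral_ofReal hintg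
        ((ae_restrict_iff' measurableSet_Ioo).mpr (Filter.Eventually.of_forall fun t ht =>
          mul_nonneg hq0.le (Real.rpow_nonneg ht.1.le _)))]
      congr 1
      rw [← MeasureTheory.integral_Ioc_eq_integral_Ioo,
        ← intervalIntegral.integral_of_le ha.le, intervalIntegral.integral_const_mul,
        integral_rpow (Or.inl (by linarith : (-1:ℝ) < q - 2))]
      rw [show q - 2 + 1 = q - 1 by ring, Real.zero_rpow (by intro hc; linarith [hc] : q - 1 ≠ 0), sub_zero]
      field_simp
    rw [key, wcalc]
    have hofa : ENNReal.ofReal a = φ x * 2 := ENNReal.ofReal_toReal h2top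
    rw [ENNReal.ofReal_mul (div_nonneg hq0.le (by linarith)), ← ENNReal.ofReal_rpow_of_nonneg ha.le (by linarith),
      hofa]
    rw [ENNReal.mul_rpow_of_ne_top htop (by norm_num)]
    calc ENNReal.ofReal (q / (q - 1)) * (φ x ^ (q-1) * 2 ^ (q-1)) * φ x
        = ENNReal.ofReal (q / (q - 1)) * 2 ^ (q-1) * (φ x ^ (q-1) * φ x ^ (1:ℝ)) := by
          rw [ENNReal.rpow_one]; ring
      _ = ENNReal.ofReal (q / (q - 1)) * 2 ^ (q-1) * φ x ^ q := by
          rw [← ENNReal.rpow_add _ _ h0 htop, show q - 1 + 1 = q by ring]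
      _ ≤ ENNReal.ofReal (q / (q - 1)) * 2 ^ (q - 1) * φ x ^ q := le_rfl
  -- assemble
  calc ∫⁻ x, h x ^ q
      = ∫⁻ t in Set.Ioi (0:ℝ), volume {x | t < (h x).toReal} * ENNReal.ofReal (q * t ^ (q-1)) :=
        step2
    _ ≤ ∫⁻ t in Set.Ioi (0:ℝ), 2 * 3 ^ n * ∫⁻ x, F t x := step3
    _ = 2 * 3 ^ n * ∫⁻ x, ∫⁻ t in Set.Ioi (0:ℝ), F t x := step4
    _ ≤ 2 * 3 ^ n * ∫⁻ x, ENNReal.ofReal (q / (q - 1)) * 2 ^ (q - 1) * φ x ^ q := by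
        exact mul_le_mul_right (lintegral_mono step5) _
    _ = 2 * 3 ^ n * (ENNReal.ofReal (q / (q - 1)) * 2 ^ (q - 1)) * ∫⁻ x, φ x ^ q := by
        rw [lintegral_const_mul _ (hφ.pow_const q), ← mul_assoc]


def K (n : ℕ) (q : ℝ) : ℝ≥0∞ :=
  2 * 3 ^ n * (ENNReal.ofReal (q / (q - 1)) * 2 ^ (q - 1))

lemma K_ne_zero {q : ℝ} (hq : 1 < q) : K n q ≠ 0 := by
  refine mul_ne_zero (mul_ne_zero (by norm_num) (by positivity)) (mul_ne_zero ?_ ?_)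
  · rw [Ne, ENNReal.ofReal_eq_zero, not_le]
    exact div_pos (by linarith) (by linarith)
  · exact (ENNReal.rpow_pos (by norm_num) (by norm_num)).ne'
lemma K_ne_top {q : ℝ} (hq : 1 < q) : K n q ≠ ∞ := by
  refine ENNReal.mul_ne_top (ENNReal.mul_ne_top (by norm_num) ?_)
    (ENNReal.mul_ne_top ENNReal.ofReal_ne_top ?_)
  · exact (ENNReal.pow_ne_top (by norm_num))
  · exact ENNReal.rpow_ne_top_of_nonneg (by linarith) (by norm_num)

def CC (n : ℕ) (s p : ℝ) : ℝ≥0∞ :=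
  2 * K n (p / s) ^ (1 / p) * K n (p / (p - 1)) ^ (1 / (p / (p - 1)))

lemma finite_bound {s p : ℝ} (hs : 1 ≤ s) (hsp : s < p)
    (T : Finset (Cube n)) (E : Cube n → Set (XX n))
    (hE : ∀ Q ∈ T, E Q ⊆ Q.set ∧ MeasurableSet (E Q) ∧
      ENNReal.ofReal (1 / 2) * volume Q.set ≤ volume (E Q))
    (hdisj : (↑T : Set (Cube n)).PairwiseDisjoint E)
    (f : XX n → ℂ) (hf : Measurable f)
    (hfp : ∫⁻ x, (‖f x‖₊ : ℝ≥0∞) ^ p < ∞) :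
    (∫⁻ x, (∑ Q ∈ T, avg n s f Q * Q.set.indicator (fun _ => (1:ℝ≥0∞)) x) ^ p) ^ (1 / p)
      ≤ CC n s p * (∫⁻ x, (‖f x‖₊ : ℝ≥0∞) ^ p) ^ (1 / p) := by
  classical
  have hs0 : (0:ℝ) < s := by linarith
  have hp1 : (1:ℝ) < p := by linarith
  have hp0 : (0:ℝ) < p := by linarith
  set p' : ℝ := p / (p - 1) with hp'def
  have hp'1 : 1 < p' := by
    rw [hp'def, lt_div_iff₀ (by linarith)]
    linarith
  have hconj : p.HolderConjugate p' := Real.holderConjugate_iff.mpr ⟨hp1, by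
    rw [hp'def]
    field_simp
    ring⟩
  have hq1 : 1 < p / s := (one_lt_div hs0).mpr hsp
  set φ : XX n → ℝ≥0∞ := fun x => (‖f x‖₊ : ℝ≥0∞) ^ s with hφdef
  have hφm : Measurable φ := (hf.nnnorm.coe_nnreal_ennreal).pow_const s
  have hφq : ∀ x, φ x ^ (p / s) = (‖f x‖₊ : ℝ≥0∞) ^ p := by
    intro x
    rw [hφdef]
    rw [← ENNReal.rpow_mul]
    congr 1
    field_simp
  set F : XX n → ℝ≥0∞ :=
    fun x => ∑ Q ∈ T, avg n s f Q * Q.set.indicator (fun _ => (1:ℝ≥0∞)) x with hFdef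
  have hFm : Measurable F :=
    Finset.measurable_sum _ fun Q _ =>
      (measurable_const.indicator Q.measurableSet).const_mul _
  set g : XX n → ℝ≥0∞ := fun x => F x ^ (p - 1) with hgdef
  have hgm : Measurable g := hFm.pow_const _
  have havg : ∀ Q, avg n s f Q = cavg φ Q ^ (1 / s) := fun Q => rfl
  -- finiteness of averages of φ
  have hφint : ∀ Q : Cube n, ∫⁻ x in Q.set, φ x < ∞ := by
    intro Q
    have hconj2 : (p / s).HolderConjugate ((p/s) / (p/s - 1)) := Real.holderConjugate_iff.mpr ⟨hq1, by field_simp; ring⟩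
    have hH := ENNReal.lintegral_mul_le_Lp_mul_Lq (volume.restrict Q.set) hconj2
      hφm.aemeasurable (aemeasurable_const (b := (1:ℝ≥0∞)))
    simp only [Pi.mul_apply, mul_one, ENNReal.one_rpow, lintegral_const,
      Measure.restrict_apply MeasurableSet.univ, Set.univ_inter, one_mul] at hH
    have h1 : ∫⁻ x in Q.set, φ x ^ (p / s) ≠ ∞ := by
      have hle : ∫⁻ x in Q.set, φ x ^ (p / s) ≤ ∫⁻ x, φ x ^ (p / s) :=
        lintegral_mono' Measure.restrict_le_self le_rfl
      have heq : ∫⁻ x, φ x ^ (p / s) = ∫⁻ x, (‖f x‖₊ : ℝ≥0∞) ^ p := lintegral_congr hφq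
      exact ne_of_lt (lt_of_le_of_lt hle (heq ▸ hfp))
    refine lt_of_le_of_lt hH (ENNReal.mul_lt_top ?_ ?_)
    · exact (ENNReal.rpow_lt_top_of_nonneg
        (one_div_nonneg.mpr (div_nonneg hp0.le hs0.le)) h1)
    · exact ENNReal.rpow_lt_top_of_nonneg
        (one_div_nonneg.mpr hconj2.symm.pos.le) (Cube.volume_lt_top Q).ne
  have hcavgφ : ∀ Q ∈ T, cavg φ Q ≠ ∞ := by
    intro Q _
    exact ENNReal.mul_ne_top (ENNReal.inv_ne_top.mpr (Cube.volume_pos Q).ne') (hφint Q).ne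
  have havgtop : ∀ Q ∈ T, avg n s f Q ≠ ∞ := by
    intro Q hQ
    rw [havg]
    exact ENNReal.rpow_ne_top_of_nonneg (by positivity) (hcavgφ Q hQ)
  -- F is bounded by B
  set B : ℝ≥0∞ := ∑ Q ∈ T, avg n s f Q with hBdef
  have hBtop : B ≠ ∞ := by
    rw [hBdef]
    rw [← lt_top_iff_ne_top]
    exact ENNReal.sum_lt_top.mpr fun Q hQ => (havgtop Q hQ).lt_top
  have hFB : ∀ x, F x ≤ B := by
    intro x
    refine Finset.sum_le_sum fun Q hQ => ?_
    refine le_trans (mul_le_mul_right ?_ _) (le_of_eq (mul_one _))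
    by_cases hx : x ∈ Q.set <;> simp [hx]
  have hFtop : ∀ x, F x ≠ ∞ := fun x => ((hFB x).trans_lt hBtop.lt_top).ne
  -- g is bounded
  have hgB : ∀ x, g x ≤ B ^ (p - 1) := fun x =>
    ENNReal.rpow_le_rpow (hFB x) (by linarith)
  have hgint : ∀ Q : Cube n, ∫⁻ x in Q.set, g x < ∞ := by
    intro Q
    calc ∫⁻ x in Q.set, g x ≤ ∫⁻ _ in Q.set, B ^ (p - 1) := lintegral_mono fun x => hgB x
      _ = B ^ (p - 1) * volume Q.set := setLIntegral_const _ _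
      _ < ∞ := ENNReal.mul_lt_top
          (ENNReal.rpow_lt_top_of_nonneg (by linarith) hBtop) (Cube.volume_lt_top Q)
  have hcavgg : ∀ Q ∈ T, cavg g Q ≠ ∞ := by
    intro Q _
    exact ENNReal.mul_ne_top (ENNReal.inv_ne_top.mpr (Cube.volume_pos Q).ne') (hgint Q).ne
  -- I := ∫ F^p is finite
  set I : ℝ≥0∞ := ∫⁻ x, F x ^ p with hIdef
  have hIfin : I ≠ ∞ := by
    have hbd : ∀ x, F x ^ p ≤ (⋃ Q ∈ T, Q.set).indicator (fun _ => B ^ p) x := by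
      intro x
      by_cases hx : x ∈ ⋃ Q ∈ T, Q.set
      · rw [Set.indicator_of_mem hx]
        exact ENNReal.rpow_le_rpow (hFB x) (by linarith)
      · rw [Set.indicator_of_notMem hx]
        have : F x = 0 := by
          rw [hFdef]
          refine Finset.sum_eq_zero fun Q hQ => ?_
          rw [Set.indicator_of_notMem, mul_zero]
          exact fun hm => hx (Set.mem_biUnion hQ hm)
        rw [this, ENNReal.zero_rpow_of_pos hp0]
    have : I ≤ B ^ p * volume (⋃ Q ∈ T, Q.set) := by
      rw [hIdef]
      calc ∫⁻ x, F x ^ p ≤ ∫⁻ x, (⋃ Q ∈ T, Q.set).indicator (fun _ => B ^ p) x :=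
            lintegral_mono hbd
        _ = B ^ p * volume (⋃ Q ∈ T, Q.set) := by
            rw [lintegral_indicator (T.measurableSet_biUnion fun Q _ => Q.measurableSet)]
            exact setLIntegral_const _ _
    refine ne_of_lt (lt_of_le_of_lt this (ENNReal.mul_lt_top ?_ ?_))
    · exact ENNReal.rpow_lt_top_of_nonneg hp0.le hBtop
    · exact lt_of_le_of_lt (measure_biUnion_finset_le T _)
        (ENNReal.sum_lt_top.mpr fun Q _ => Cube.volume_lt_top Q)
  -- key1 : I = Σ_Q avg_Q ∫_Q g
  have key1 : I = ∑ Q ∈ T, avg n s f Q * ∫⁻ x in Q.set, g x := by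
    have hFg : ∀ x, F x ^ p = F x * g x := by
      intro x
      rcases eq_or_ne (F x) 0 with h0 | h0
      · rw [h0, ENNReal.zero_rpow_of_pos hp0, zero_mul]
      · rw [hgdef]
        rw [← ENNReal.rpow_one (F x), ← ENNReal.rpow_add _ _ h0 (hFtop x)]
        rw [ENNReal.rpow_one]  -- fix exps
        rw [show (1:ℝ) + (p - 1) = p by ring]
    have hsum : ∀ x, F x * g x
        = ∑ Q ∈ T, avg n s f Q * Q.set.indicator g x := by
      intro x
      rw [hFdef]
      simp only
      rw [Finset.sum_mul]
      refine Finset.sum_congr rfl fun Q hQ => ?_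
      by_cases hx : x ∈ Q.set
      · rw [Set.indicator_of_mem hx, Set.indicator_of_mem hx, mul_one]
      · rw [Set.indicator_of_notMem hx, Set.indicator_of_notMem hx]
        simp
    rw [hIdef]
    calc ∫⁻ x, F x ^ p = ∫⁻ x, ∑ Q ∈ T, avg n s f Q * Q.set.indicator g x := by
          refine lintegral_congr fun x => ?_
          rw [hFg x, hsum x]
      _ = ∑ Q ∈ T, ∫⁻ x, avg n s f Q * Q.set.indicator g x := by
          refine lintegral_finset_sum _ fun Q _ => ?_
          exact (hgm.indicator Q.measurableSet).const_mul _
      _ = ∑ Q ∈ T, avg n s f Q * ∫⁻ x in Q.set, g x := by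
          refine Finset.sum_congr rfl fun Q hQ => ?_
          rw [lintegral_const_mul _ (hgm.indicator Q.measurableSet),
            lintegral_indicator Q.measurableSet]
  -- key2 : per-cube bound
  have key2 : ∀ Q ∈ T, ∫⁻ x in Q.set, g x ≤ 2 * (cavg g Q * volume (E Q)) := by
    intro Q hQ
    have hvol : volume Q.set ≤ 2 * volume (E Q) := by
      have h12 : ENNReal.ofReal (1/2 : ℝ) = 2⁻¹ := by
        rw [show (1/2 : ℝ) = 2⁻¹ by norm_num, ENNReal.ofReal_inv_of_pos (by norm_num)]
        norm_num
      have := (hE Q hQ).2.2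
      rw [h12] at this
      calc volume Q.set = 2 * (2⁻¹ * volume Q.set) := by
            rw [← mul_assoc, ENNReal.mul_inv_cancel (by norm_num) (by norm_num), one_mul]
        _ ≤ 2 * volume (E Q) := mul_le_mul_right this _
    calc ∫⁻ x in Q.set, g x = cavg g Q * volume Q.set := by
          rw [cavg, mul_comm ((volume Q.set)⁻¹), mul_assoc,
            ENNReal.inv_mul_cancel (Cube.volume_pos Q).ne' (Cube.volume_lt_top Q).ne, mul_one]
      _ ≤ cavg g Q * (2 * volume (E Q)) := mul_le_mul_right hvol _
      _ = 2 * (cavg g Q * volume (E Q)) := by ring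
  -- key3 : sum over disjoint E_Q
  have key3 : ∑ Q ∈ T, avg n s f Q * (cavg g Q * volume (E Q))
      ≤ ∫⁻ x, maxOp T φ x ^ (1/s) * maxOp T g x := by
    have hEm : ∀ Q ∈ T, MeasurableSet (E Q) := fun Q hQ => (hE Q hQ).2.1
    calc ∑ Q ∈ T, avg n s f Q * (cavg g Q * volume (E Q))
        ≤ ∑ Q ∈ T, ∫⁻ x in E Q, maxOp T φ x ^ (1/s) * maxOp T g x := by
          refine Finset.sum_le_sum fun Q hQ => ?_
          have hpt : ∀ x ∈ E Q,
              avg n s f Q * cavg g Q ≤ maxOp T φ x ^ (1/s) * maxOp T g x := by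
            intro x hx
            have hxQ : x ∈ Q.set := (hE Q hQ).1 hx
            refine mul_le_mul' ?_ (cavg_le_maxOp hQ hxQ)
            rw [havg]
            exact ENNReal.rpow_le_rpow (cavg_le_maxOp hQ hxQ) (by positivity)
          calc avg n s f Q * (cavg g Q * volume (E Q))
              = ∫⁻ _ in E Q, avg n s f Q * cavg g Q := by
                rw [setLIntegral_const, mul_assoc]
            _ ≤ ∫⁻ x in E Q, maxOp T φ x ^ (1/s) * maxOp T g x := by
                refine setLIntegral_mono' (hEm Q hQ) hpt
      _ = ∫⁻ x in ⋃ Q ∈ T, E Q, maxOp T φ x ^ (1/s) * maxOp T g x := by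
          rw [lintegral_biUnion_finset hdisj hEm]
      _ ≤ ∫⁻ x, maxOp T φ x ^ (1/s) * maxOp T g x :=
          lintegral_mono' Measure.restrict_le_self (le_of_eq rfl)
  -- key4 : Hölder
  have key4 : ∫⁻ x, maxOp T φ x ^ (1/s) * maxOp T g x
      ≤ (∫⁻ x, maxOp T φ x ^ (p/s)) ^ (1/p) * (∫⁻ x, maxOp T g x ^ p') ^ (1/p') := by
    have hH := ENNReal.lintegral_mul_le_Lp_mul_Lq volume hconj
      (((measurable_maxOp T φ).pow_const (1/s)).aemeasurable)
      ((measurable_maxOp T g).aemeasurable)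
    simp only [Pi.mul_apply] at hH
    simp only [← ENNReal.rpow_mul] at hH
    rw [show 1 / s * p = p / s by field_simp] at hH
    exact hH
  -- strong type applications
  have key5 : ∫⁻ x, maxOp T φ x ^ (p/s) ≤ K n (p/s) * ∫⁻ x, (‖f x‖₊ : ℝ≥0∞) ^ p := by
    have := strong_type T hφm hq1 hcavgφ
    rw [K]
    refine le_trans this (le_of_eq ?_)
    congr 1
    exact lintegral_congr hφq
  have key6 : ∫⁻ x, maxOp T g x ^ p' ≤ K n p' * I := by
    have := strong_type T hgm hp'1 hcavgg
    rw [K]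
    refine le_trans this (le_of_eq ?_)
    congr 1
    rw [hIdef]
    refine lintegral_congr fun x => ?_
    rw [hgdef]
    simp only
    rw [← ENNReal.rpow_mul]
    congr 1
    rw [hp'def]
    field_simp
    exact div_self (by linarith : p - 1 ≠ 0)
  -- assemble
  set Np : ℝ≥0∞ := (∫⁻ x, (‖f x‖₊ : ℝ≥0∞) ^ p) ^ (1/p) with hNp
  have main : I ≤ (2 * K n (p/s) ^ (1/p) * K n p' ^ (1/p') * Np) * I ^ (1/p') := by
    calc I = ∑ Q ∈ T, avg n s f Q * ∫⁻ x in Q.set, g x := key1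
      _ ≤ ∑ Q ∈ T, avg n s f Q * (2 * (cavg g Q * volume (E Q))) := by
          refine Finset.sum_le_sum fun Q hQ => mul_le_mul_right (key2 Q hQ) _
      _ = 2 * ∑ Q ∈ T, avg n s f Q * (cavg g Q * volume (E Q)) := by
          rw [Finset.mul_sum]
          refine Finset.sum_congr rfl fun Q _ => by ring
      _ ≤ 2 * ∫⁻ x, maxOp T φ x ^ (1/s) * maxOp T g x := mul_le_mul_right key3 _
      _ ≤ 2 * ((∫⁻ x, maxOp T φ x ^ (p/s)) ^ (1/p) * (∫⁻ x, maxOp T g x ^ p') ^ (1/p')) :=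
          mul_le_mul_right key4 _
      _ ≤ 2 * ((K n (p/s) * ∫⁻ x, (‖f x‖₊ : ℝ≥0∞) ^ p) ^ (1/p) * (K n p' * I) ^ (1/p')) := by
          refine mul_le_mul_right (mul_le_mul' ?_ ?_) _
          · exact ENNReal.rpow_le_rpow key5 (by positivity)
          · exact ENNReal.rpow_le_rpow key6 (by positivity)
      _ = (2 * K n (p/s) ^ (1/p) * K n p' ^ (1/p') * Np) * I ^ (1/p') := by
          rw [ENNReal.mul_rpow_of_nonneg _ _ (by positivity : (0:ℝ) ≤ 1/p),
            ENNReal.mul_rpow_of_nonneg _ _ (by positivity : (0:ℝ) ≤ 1/p'), hNp]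
          ring
  have goal : I ^ (1/p) ≤ 2 * K n (p/s) ^ (1/p) * K n p' ^ (1/p') * Np := by
    rcases eq_or_ne I 0 with h0 | h0
    · rw [h0, ENNReal.zero_rpow_of_pos (by positivity)]
      exact zero_le
    · have hIp' : I ^ (1/p') ≠ 0 := by
        rw [Ne, ENNReal.rpow_eq_zero_iff]
        intro hc
        rcases hc with ⟨hc1, -⟩ | ⟨hc1, -⟩
        · exact h0 hc1
        · exact hIfin hc1
      have hIp't : I ^ (1/p') ≠ ∞ := ENNReal.rpow_ne_top_of_nonneg (by positivity) hIfin
      have hexp : 1/p + 1/p' = 1 := by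
        rw [one_div, one_div]; exact hconj.inv_add_inv_eq_one
      have hsplit : I = I ^ (1/p) * I ^ (1/p') := by
        rw [← ENNReal.rpow_add _ _ h0 hIfin, hexp, ENNReal.rpow_one]
      conv_lhs at main => rw [hsplit]
      exact (ENNReal.mul_le_mul_iff_left hIp' hIp't).mp main
  calc I ^ (1/p) ≤ 2 * K n (p/s) ^ (1/p) * K n p' ^ (1/p') * Np := goal
    _ = CC n s p * Np := by rw [CC, hp'def]

end Aux

/-- for a `(1/2)`-sparse family `S`, `s ≥ 1` and `p > s`, the sparse
operator `A^s_S` is bounded on `L^p`: `‖A^s_S f‖_{L^p} ≤ C(n,p,s) ‖f‖_{L^p}`. -/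
theorem sparseOp_Lp_bound (n : ℕ) (s p : ℝ) (hs : 1 ≤ s) (hsp : s < p) :
    ∃ C : ℝ≥0∞, 0 < C ∧ C < ∞ ∧
      ∀ (S : Set (Cube n)), IsSparse n (1 / 2) S →
        ∀ f : (Fin n → ℝ) → ℂ, Measurable f → MemLp f (ENNReal.ofReal p) volume →
          (∫⁻ x, sparseOp n s S f x ^ p) ^ (1 / p)
            ≤ C * (∫⁻ x, (‖f x‖₊ : ℝ≥0∞) ^ p) ^ (1 / p) := by
  classical
  have hs0 : (0:ℝ) < s := by linarith
  have hp1 : (1:ℝ) < p := by linarith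
  have hp0 : (0:ℝ) < p := by linarith
  have hq1 : 1 < p / s := (one_lt_div hs0).mpr hsp
  have hp'1 : 1 < p / (p - 1) := by
    rw [lt_div_iff₀ (by linarith)]
    linarith
  refine ⟨CC n s p, ?_, ?_, ?_⟩
  · rw [CC, pos_iff_ne_zero]
    refine mul_ne_zero (mul_ne_zero (by norm_num) ?_) ?_
    · exact (ENNReal.rpow_pos (pos_iff_ne_zero.mpr (K_ne_zero hq1)) (K_ne_top hq1)).ne'
    · exact (ENNReal.rpow_pos (pos_iff_ne_zero.mpr (K_ne_zero hp'1)) (K_ne_top hp'1)).ne'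
  · rw [CC, lt_top_iff_ne_top]
    refine ENNReal.mul_ne_top (ENNReal.mul_ne_top (by norm_num) ?_) ?_
    · exact ENNReal.rpow_ne_top_of_nonneg (by positivity) (K_ne_top hq1)
    · exact ENNReal.rpow_ne_top_of_nonneg (by positivity) (K_ne_top hp'1)
  intro S hS f hf hmem
  obtain ⟨E, hE, hdisj⟩ := hS
  -- countability of S
  have hcnt : S.Countable := by
    have hm : ∀ Q : ↥S, MeasurableSet (E ↑Q) := fun Q => (hE ↑Q Q.2).2.1
    have hd : Pairwise (Function.onFun Disjoint fun Q : ↥S => E ↑Q) := by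
      intro Q Q' hne
      exact hdisj Q.2 Q'.2 (Subtype.coe_injective.ne hne)
    have hpos : ∀ Q : ↥S, 0 < volume (E ↑Q) := by
      intro Q
      refine lt_of_lt_of_le ?_ (hE ↑Q Q.2).2.2
      exact ENNReal.mul_pos (by simp) (Cube.volume_pos _).ne'
    have := MeasureTheory.Measure.countable_meas_pos_of_disjoint_iUnion
      (μ := volume) hm hd
    have huniv : {Q : ↥S | 0 < volume (E ↑Q)} = Set.univ := by
      ext Q; simpa using hpos Q
    rw [huniv, Set.countable_univ_iff] at this
    exact Set.countable_coe_iff.mp this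
  haveI : Countable ↥S := hcnt.to_subtype
  -- Lp finiteness of f
  have hfp : ∫⁻ x, (‖f x‖₊ : ℝ≥0∞) ^ p < ∞ := by
    have h1 := hmem.2
    rw [eLpNorm_eq_lintegral_rpow_enorm_toReal
      ((ENNReal.ofReal_pos.mpr hp0).ne') ENNReal.ofReal_ne_top] at h1
    rw [ENNReal.toReal_ofReal hp0.le] at h1
    by_contra hc
    rw [not_lt, top_le_iff] at hc
    change (∫⁻ x, (‖f x‖₊ : ℝ≥0∞) ^ p) ^ (1 / p) < ∞ at h1
    rw [hc, ENNReal.top_rpow_of_pos (by positivity)] at h1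
    exact absurd h1 (by simp)
  set Np : ℝ≥0∞ := (∫⁻ x, (‖f x‖₊ : ℝ≥0∞) ^ p) ^ (1/p) with hNp
  -- finite partial sums
  set G : Finset ↥S → XX n → ℝ≥0∞ :=
    fun t x => ∑ Q ∈ t, avg n s f ↑Q * (↑Q : Cube n).set.indicator (fun _ => (1:ℝ≥0∞)) x
    with hG
  have hGm : ∀ t, Measurable (G t) := fun t =>
    Finset.measurable_sum _ fun Q _ =>
      (measurable_const.indicator (Cube.measurableSet _)).const_mul _
  have hmono : Monotone G := by
    intro t t' h x
    exact Finset.sum_le_sum_of_subset h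
  have hsup : ∀ x, sparseOp n s S f x = ⨆ t : Finset ↥S, G t x := by
    intro x
    exact ENNReal.tsum_eq_iSup_sum
  -- finite bound for each t
  have hfin : ∀ t : Finset ↥S, ∫⁻ x, G t x ^ p ≤ (CC n s p * Np) ^ p := by
    intro t
    set T : Finset (Cube n) := t.image Subtype.val with hT
    have hTS : (↑T : Set (Cube n)) ⊆ S := by
      intro Q hQ
      rw [hT] at hQ
      simp only [Finset.coe_image, Set.mem_image] at hQ
      obtain ⟨Q', _, rfl⟩ := hQ
      exact Q'.2
    have hbound := finite_bound hs hsp T E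
      (fun Q hQ => hE Q (hTS hQ)) (hdisj.subset hTS) f hf hfp
    have hpow := ENNReal.rpow_le_rpow hbound hp0.le
    rw [← ENNReal.rpow_mul, one_div_mul_cancel hp0.ne', ENNReal.rpow_one] at hpow
    have hsum_eq : ∀ x, G t x
        = ∑ Q ∈ T, avg n s f Q * Q.set.indicator (fun _ => (1:ℝ≥0∞)) x := by
      intro x
      rw [hG, hT]
      simp only
      rw [Finset.sum_image (fun a _ b _ h => Subtype.coe_injective h)]
    calc ∫⁻ x, G t x ^ p
        = ∫⁻ x, (∑ Q ∈ T, avg n s f Q * Q.set.indicator (fun _ => (1:ℝ≥0∞)) x) ^ p :=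
          lintegral_congr fun x => by rw [hsum_eq]
      _ ≤ (CC n s p * Np) ^ p := hpow
  -- sup commutes
  have hswap : ∫⁻ x, sparseOp n s S f x ^ p ≤ (CC n s p * Np) ^ p := by
    have hpt : ∀ x, sparseOp n s S f x ^ p = ⨆ t : Finset ↥S, G t x ^ p := by
      intro x
      rw [hsup x]
      apply le_antisymm
      · set A := ⨆ t : Finset ↥S, G t x ^ p with hA
        have h1 : ∀ t, G t x ≤ A ^ (1/p) := by
          intro t
          have h2 : G t x ^ p ≤ A := le_iSup (fun t => G t x ^ p) t
          have h3 := ENNReal.rpow_le_rpow h2 (by positivity : (0:ℝ) ≤ 1/p)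
          rwa [← ENNReal.rpow_mul, mul_one_div, div_self hp0.ne', ENNReal.rpow_one] at h3
        have h3 : (⨆ t, G t x) ≤ A ^ (1/p) := iSup_le h1
        have h4 := ENNReal.rpow_le_rpow h3 hp0.le
        rwa [← ENNReal.rpow_mul, one_div, inv_mul_cancel₀ hp0.ne', ENNReal.rpow_one] at h4
      · exact iSup_le fun t =>
          ENNReal.rpow_le_rpow (le_iSup (fun t => G t x) t) hp0.le
    calc ∫⁻ x, sparseOp n s S f x ^ p = ∫⁻ x, ⨆ t : Finset ↥S, G t x ^ p :=
          lintegral_congr hpt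
      _ = ⨆ t : Finset ↥S, ∫⁻ x, G t x ^ p := by
          refine lintegral_iSup_directed (fun t => ((hGm t).pow_const p).aemeasurable) ?_
          have hmono2 : Monotone (fun t => fun x => G t x ^ p) := by
            intro t t' h x
            exact ENNReal.rpow_le_rpow (hmono h x) hp0.le
          exact hmono2.directed_le
      _ ≤ (CC n s p * Np) ^ p := iSup_le hfin
  have hfinal := ENNReal.rpow_le_rpow hswap (by positivity : (0:ℝ) ≤ 1/p)
  rwa [← ENNReal.rpow_mul, mul_one_div, div_self hp0.ne', ENNReal.rpow_one, hNp] at hfinal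
end
end

section
/- Let f be a measurable function on Q with median m_f(Q), 0 < δ < 1, and suppose T is sublinear and satisfies ‖T(fχ_Q)‖_{L^{1,∞}(Q)} ≤ |Q| · ‖f‖_{Φ,Q} for a Young function Φ. Then |m_{Tf}(Q)| ≤ c_δ ‖f‖_{Φ,Q} for every median m_{Tf}(Q) of Tf on Q. -/
open MeasureTheory ENNReal

noncomputable section

/-- A Young function: continuous, convex, increasing on `[0,∞)`, `Φ(0) = 0`,
`Φ(t) → ∞` as `t → ∞`. -/
structure YoungFunction where
  toFun : ℝ → ℝ
  zero : toFun 0 = 0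
  mono : MonotoneOn toFun (Set.Ici 0)
  convex : ConvexOn ℝ (Set.Ici 0) toFun
  continuous : ContinuousOn toFun (Set.Ici 0)
  tendsto_atTop : Filter.Tendsto toFun Filter.atTop Filter.atTop

/-- The Luxemburg norm `‖f‖_{Φ,Q} = inf {λ > 0 : (1/|Q|) ∫_Q Φ(|f|/λ) ≤ 1}`. -/
def luxemburgNorm (n : ℕ) (Φ : ℝ → ℝ) (f : (Fin n → ℝ) → ℝ) (Q : Cube n) : ℝ :=
  sInf {lam : ℝ | 0 < lam ∧
    (∫⁻ x in Q.set, ENNReal.ofReal (Φ (|f x| / lam))) ≤ volume Q.set}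

/-- if `T` is sublinear and `‖T(fχ_Q)‖_{L^{1,∞}(Q)} ≤ |Q| ‖f‖_{Φ,Q}`,
then any median of `T(fχ_Q)` on `Q` satisfies `|m_{Tf}(Q)| ≤ c_δ ‖f‖_{Φ,Q}`. -/
theorem abs_median_le_luxemburgNorm (n : ℕ) (Φ : YoungFunction)
    (δ : ℝ) (hδ0 : 0 < δ) (hδ1 : δ < 1) :
    ∃ c : ℝ, 0 < c ∧
      ∀ (T : ((Fin n → ℝ) → ℝ) → (Fin n → ℝ) → ℝ),
        (∀ (f g : (Fin n → ℝ) → ℝ) (x : Fin n → ℝ),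
          |T (f + g) x| ≤ |T f x| + |T g x|) →
        (∀ (Q : Cube n) (f : (Fin n → ℝ) → ℝ) (t : ℝ), 0 < t →
          ENNReal.ofReal t *
              volume {x | x ∈ Q.set ∧ t < |T (Q.set.indicator f) x|}
            ≤ volume Q.set * ENNReal.ofReal (luxemburgNorm n Φ.toFun f Q)) →
        ∀ (Q : Cube n) (f : (Fin n → ℝ) → ℝ) (m : ℝ),
          volume {x | x ∈ Q.set ∧ m < T (Q.set.indicator f) x} ≤ volume Q.set / 2 →
          volume {x | x ∈ Q.set ∧ T (Q.set.indicator f) x < m} ≤ volume Q.set / 2 →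
          |m| ≤ c * luxemburgNorm n Φ.toFun f Q := by
  refine ⟨3, by norm_num, ?_⟩
  intro T _ hweak Q f m h1 h2
  set L := luxemburgNorm n Φ.toFun f Q with hLdef
  have hL0 : 0 ≤ L := Real.sInf_nonneg (fun x hx => hx.1.le)
  -- volume of the cube
  have hQeq : Q.set = Set.pi Set.univ (fun i => Set.Icc (Q.c i - Q.r) (Q.c i + Q.r)) := by
    ext x
    simp only [Cube.set, Set.mem_setOf_eq, Set.mem_pi, Set.mem_univ, Set.mem_Icc,
      forall_true_left]
    constructor
    · intro h i; have := abs_le.mp (h i); constructor <;> linarith [this.1, this.2]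
    · intro h i; rw [abs_le]; constructor <;> linarith [(h i).1, (h i).2]
  have hQvol : volume Q.set = ENNReal.ofReal (2 * Q.r) ^ n := by
    rw [hQeq, volume_pi_pi]
    simp [Real.volume_Icc]
    congr 1
    ring_nf
    rw [ENNReal.ofReal_mul (by linarith [Q.r_pos] : (0:ℝ) ≤ Q.r), ENNReal.ofReal_ofNat]
  have hr2 : (0:ℝ) < 2 * Q.r := by linarith [Q.r_pos]
  have hQpos : volume Q.set ≠ 0 := by
    rw [hQvol]
    exact pow_ne_zero _ (by simp [ENNReal.ofReal_eq_zero, not_le, hr2, Q.r_pos])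
  have hQfin : volume Q.set ≠ ⊤ := by
    rw [hQvol]; exact ENNReal.pow_ne_top ENNReal.ofReal_ne_top
  by_contra hcon
  push_neg at hcon
  have hm : 3 * L < |m| := hcon
  set t := (2 * L + |m|) / 2 with htdef
  have habs : 0 < |m| := by linarith
  have ht0 : 0 < t := by positivity
  have htm : t < |m| := by
    rw [htdef]; linarith
  have h2Lt : 2 * L < t := by
    rw [htdef]; linarith
  have hX := hweak Q f t ht0
  set X := volume {x | x ∈ Q.set ∧ t < |T (Q.set.indicator f) x|} with hXdef
  have hXlt : X < volume Q.set / 2 := by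
    by_contra hge
    push_neg at hge
    have hkey : ENNReal.ofReal t * (volume Q.set / 2) ≤ volume Q.set * ENNReal.ofReal L :=
      le_trans (mul_le_mul_right hge _) hX
    have hkey2 : volume Q.set * ENNReal.ofReal t ≤ volume Q.set * ENNReal.ofReal (2 * L) := by
      calc volume Q.set * ENNReal.ofReal t
          = ENNReal.ofReal t * (volume Q.set / 2) * 2 := by
            rw [mul_assoc, ENNReal.div_mul_cancel (by norm_num) (by norm_num), mul_comm]
        _ ≤ volume Q.set * ENNReal.ofReal L * 2 := mul_le_mul_left hkey 2
        _ = volume Q.set * ENNReal.ofReal (2 * L) := by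
            rw [ENNReal.ofReal_mul (by norm_num : (0:ℝ) ≤ 2)]
            simp only [ENNReal.ofReal_ofNat]
            ring
    have := (ENNReal.mul_le_mul_iff_right hQpos hQfin).mp hkey2
    have := (ENNReal.ofReal_le_ofReal_iff (by linarith)).mp this
    linarith
  -- Q.set is covered by the median set and the level set
  rcases lt_or_ge m 0 with hmneg | hmpos
  · -- m < 0 : use h1
    have hsub : Q.set ⊆ {x | x ∈ Q.set ∧ m < T (Q.set.indicator f) x} ∪
        {x | x ∈ Q.set ∧ t < |T (Q.set.indicator f) x|} := by
      intro x hx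
      rcases lt_or_ge m (T (Q.set.indicator f) x) with h | h
      · exact Or.inl ⟨hx, h⟩
      · refine Or.inr ⟨hx, ?_⟩
        have hmabs : |m| = -m := abs_of_neg hmneg
        have : -(T (Q.set.indicator f) x) ≥ -m := by linarith
        calc t < |m| := htm
          _ = -m := hmabs
          _ ≤ -(T (Q.set.indicator f) x) := this
          _ ≤ |T (Q.set.indicator f) x| := neg_le_abs _
    have hle : volume Q.set ≤
        volume {x | x ∈ Q.set ∧ m < T (Q.set.indicator f) x} + X :=
      le_trans (measure_mono hsub) (measure_union_le _ _)
    have hlt : volume {x | x ∈ Q.set ∧ m < T (Q.set.indicator f) x} + X <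
        volume Q.set / 2 + volume Q.set / 2 :=
      ENNReal.add_lt_add_of_le_of_lt
        (ne_top_of_le_ne_top (ENNReal.div_lt_top hQfin (by norm_num)).ne h1) h1 hXlt
    rw [ENNReal.add_halves] at hlt
    exact absurd (lt_of_le_of_lt hle hlt) (lt_irrefl _)
  · -- 0 ≤ m : use h2
    have hmabs : |m| = m := abs_of_nonneg hmpos
    have hsub : Q.set ⊆ {x | x ∈ Q.set ∧ T (Q.set.indicator f) x < m} ∪
        {x | x ∈ Q.set ∧ t < |T (Q.set.indicator f) x|} := by
      intro x hx
      rcases lt_or_ge (T (Q.set.indicator f) x) m with h | h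
      · exact Or.inl ⟨hx, h⟩
      · refine Or.inr ⟨hx, ?_⟩
        calc t < |m| := htm
          _ = m := hmabs
          _ ≤ T (Q.set.indicator f) x := h
          _ ≤ |T (Q.set.indicator f) x| := le_abs_self _
    have hle : volume Q.set ≤
        volume {x | x ∈ Q.set ∧ T (Q.set.indicator f) x < m} + X :=
      le_trans (measure_mono hsub) (measure_union_le _ _)
    have hlt : volume {x | x ∈ Q.set ∧ T (Q.set.indicator f) x < m} + X <
        volume Q.set / 2 + volume Q.set / 2 :=
      ENNReal.add_lt_add_of_le_of_lt
        (ne_top_of_le_ne_top (ENNReal.div_lt_top hQfin (by norm_num)).ne h2) h2 hXlt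
    rw [ENNReal.add_halves] at hlt
    exact absurd (lt_of_le_of_lt hle hlt) (lt_irrefl _)
end
end

section
/- Let Φ be a Young function such that γ_Φ(p) := sup_{t ≥ 1} Φ(t)/t^{p'} < ∞ for some p > 1 (with p' the conjugate exponent). Then the Orlicz average is controlled by the L^{r}-average: ‖f‖_{Φ,Q} ≤ C(γ_Φ(r'))^{1/r} ⟨f⟩_{r,Q} for any r > 1 with γ_Φ(r') < ∞; consequently M_Φ f(x) ≤ C(γ_Φ(r'))^{1/r} M_r f(x) pointwise. -/
open MeasureTheory ENNReal

noncomputable section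

/-- `γ_Φ(p) = sup_{t ≥ 1} Φ(t)/t^{p'}`, where `p' = p/(p-1)` is the conjugate
exponent of `p`. -/
def gammaPhi (Φ : ℝ → ℝ) (p : ℝ) : ℝ :=
  sSup ((fun t => Φ t / t ^ (p / (p - 1))) '' Set.Ici 1)

/-- The normalized `L^r` average `⟨f⟩_{r,Q}` of a real function on a cube. -/
def avgR (n : ℕ) (r : ℝ) (f : (Fin n → ℝ) → ℝ) (Q : Cube n) : ℝ≥0∞ :=
  ((volume Q.set)⁻¹ * ∫⁻ x in Q.set, ENNReal.ofReal |f x| ^ r) ^ (1 / r)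

/-- The Orlicz maximal operator `M_Φ f(x) = sup_{Q ∋ x} ‖f‖_{Φ,Q}`. -/
def orliczMax (n : ℕ) (Φ : ℝ → ℝ) (f : (Fin n → ℝ) → ℝ) (x : Fin n → ℝ) : ℝ≥0∞ :=
  ⨆ (Q : Cube n) (_ : x ∈ Q.set), ENNReal.ofReal (luxemburgNorm n Φ f Q)

/-- The maximal operator `M_r f(x) = sup_{Q ∋ x} ⟨f⟩_{r,Q}`. -/
def maximalR (n : ℕ) (r : ℝ) (f : (Fin n → ℝ) → ℝ) (x : Fin n → ℝ) : ℝ≥0∞ :=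
  ⨆ (Q : Cube n) (_ : x ∈ Q.set), avgR n r f Q

-- auxiliary lemmas

lemma Cube.volume_set_s15 {n : ℕ} (Q : Cube n) :
    volume Q.set = ENNReal.ofReal (2 * Q.r) ^ n := by
  have h : Q.set = Set.pi Set.univ (fun i => Set.Icc (Q.c i - Q.r) (Q.c i + Q.r)) := by
    ext x
    simp only [Cube.set, Set.mem_setOf_eq, Set.mem_pi, Set.mem_univ, true_imp_iff,
      Set.mem_Icc, abs_le]
    constructor <;> intro h i <;> have := h i <;> constructor <;> linarith [this.1, this.2]
  rw [h, volume_pi_pi]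
  simp [Real.volume_Icc]
  rw [two_mul, ENNReal.ofReal_add Q.r_pos.le Q.r_pos.le]

lemma Cube.volume_pos_s15 {n : ℕ} (Q : Cube n) : 0 < volume Q.set := by
  rw [Q.volume_set_s15]
  exact ENNReal.pow_pos (ENNReal.ofReal_pos.2 (by linarith [Q.r_pos])) n

lemma Cube.volume_ne_top {n : ℕ} (Q : Cube n) : volume Q.set ≠ ⊤ := by
  rw [Q.volume_set_s15]
  exact pow_ne_top ENNReal.ofReal_ne_top

/-- if `γ_Φ(r') < ∞` for some `r > 1`, then
`‖f‖_{Φ,Q} ≤ C (γ_Φ(r'))^{1/r} ⟨f⟩_{r,Q}` and consequently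
`M_Φ f(x) ≤ C (γ_Φ(r'))^{1/r} M_r f(x)` pointwise. -/
theorem luxemburgNorm_le_avg_and_orliczMax_le_maximal (n : ℕ) (Φ : YoungFunction)
    (r : ℝ) (hr : 1 < r)
    (hγ : BddAbove ((fun t => Φ.toFun t / t ^ ((r / (r - 1)) / (r / (r - 1) - 1))) ''
      Set.Ici 1)) :
    ∃ C : ℝ, 0 < C ∧
      (∀ (f : (Fin n → ℝ) → ℝ), Measurable f → ∀ Q : Cube n,
        ENNReal.ofReal (luxemburgNorm n Φ.toFun f Q)
          ≤ ENNReal.ofReal (C * gammaPhi Φ.toFun (r / (r - 1)) ^ (1 / r)) * avgR n r f Q) ∧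
      (∀ (f : (Fin n → ℝ) → ℝ), Measurable f → ∀ x : Fin n → ℝ,
        orliczMax n Φ.toFun f x
          ≤ ENNReal.ofReal (C * gammaPhi Φ.toFun (r / (r - 1)) ^ (1 / r)) *
            maximalR n r f x) := by
  have hr0 : (0:ℝ) < r := by linarith
  have hrne : r ≠ 0 := ne_of_gt hr0
  have hr1 : r - 1 ≠ 0 := by intro h; apply hrne; linarith [sub_eq_zero.1 h]
  -- the exponent simplifies to r
  have hexp : (r / (r - 1)) / (r / (r - 1) - 1) = r := by
    field_simp
    ring
  -- γ
  set γ : ℝ := gammaPhi Φ.toFun (r / (r - 1)) with hγdef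
  have hγset : γ = sSup ((fun t => Φ.toFun t / t ^ r) '' Set.Ici 1) := by
    rw [hγdef, gammaPhi, hexp]
  have hbdd : BddAbove ((fun t => Φ.toFun t / t ^ r) '' Set.Ici 1) := by
    rwa [hexp] at hγ
  -- Φ is nonneg on [0, ∞)
  have hΦ0 : ∀ t : ℝ, 0 ≤ t → 0 ≤ Φ.toFun t := by
    intro t ht
    have := Φ.mono (Set.self_mem_Ici) (Set.mem_Ici.2 ht) ht
    rwa [Φ.zero] at this
  -- bound Φ t ≤ γ t^r for t ≥ 1
  have hΦγ : ∀ t : ℝ, 1 ≤ t → Φ.toFun t ≤ γ * t ^ r := by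
    intro t ht
    have h1 : Φ.toFun t / t ^ r ≤ γ := by
      rw [hγset]
      exact le_csSup hbdd ⟨t, ht, rfl⟩
    have ht0 : (0:ℝ) < t ^ r := Real.rpow_pos_of_pos (by linarith) r
    calc Φ.toFun t = (Φ.toFun t / t ^ r) * t ^ r := by field_simp
    _ ≤ γ * t ^ r := by nlinarith
  -- γ > 0
  have hγpos : 0 < γ := by
    obtain ⟨t₀, ht₀⟩ := (Φ.tendsto_atTop.eventually (Filter.eventually_ge_atTop 1)).and
      (Filter.eventually_ge_atTop 1) |>.exists
    have ht0 : (0:ℝ) < t₀ ^ r := Real.rpow_pos_of_pos (by linarith [ht₀.2]) r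
    have := hΦγ t₀ ht₀.2
    nlinarith [ht₀.1]
  -- Φ 1 ≤ γ
  have hΦ1 : Φ.toFun 1 ≤ γ := by
    have := hΦγ 1 le_rfl
    rwa [Real.one_rpow, mul_one] at this
  -- choose s ∈ (0,1] with Φ s ≤ 1/2
  obtain ⟨s, hsΦ, hs0, hs1⟩ : ∃ s : ℝ, Φ.toFun s ≤ 1/2 ∧ 0 < s ∧ s ≤ 1 := by
    have hc : Filter.Tendsto Φ.toFun (nhdsWithin 0 (Set.Ioi 0)) (nhds 0) := by
      have := (Φ.continuous 0 Set.self_mem_Ici).tendsto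
      rw [Φ.zero] at this
      exact this.mono_left (nhdsWithin_mono 0 Set.Ioi_subset_Ici_self)
    have h1 : ∀ᶠ s in nhdsWithin 0 (Set.Ioi 0), Φ.toFun s < 1/2 :=
      hc.eventually (Filter.Tendsto.eventually_lt_const (by norm_num) Filter.tendsto_id)
    have h2 : Set.Ioo (0:ℝ) 1 ∈ nhdsWithin 0 (Set.Ioi 0) :=
      Ioo_mem_nhdsGT_of_mem ⟨le_refl 0, zero_lt_one⟩
    obtain ⟨s, hs1, hs2⟩ := (h1.and h2).exists
    exact ⟨s, le_of_lt hs1, hs2.1, le_of_lt hs2.2⟩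
  have hsr : (0:ℝ) < s ^ r := Real.rpow_pos_of_pos hs0 r
  -- key pointwise bound: Φ t ≤ 1/2 + (γ / s^r) * t^r for all t ≥ 0
  have key : ∀ t : ℝ, 0 ≤ t → Φ.toFun t ≤ 1/2 + (γ / s ^ r) * t ^ r := by
    intro t ht
    have htr : (0:ℝ) ≤ t ^ r := Real.rpow_nonneg ht r
    rcases le_or_gt t s with h | h
    · have := Φ.mono (Set.mem_Ici.2 ht) (Set.mem_Ici.2 hs0.le) h
      have hpos : 0 ≤ (γ / s ^ r) * t ^ r := by positivity
      linarith
    · rcases le_or_gt t 1 with h1 | h1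
      · have hm := Φ.mono (Set.mem_Ici.2 ht) (Set.mem_Ici.2 zero_le_one) h1
        have hstr : s ^ r ≤ t ^ r := Real.rpow_le_rpow hs0.le h.le hr0.le
        have : γ ≤ (γ / s ^ r) * t ^ r := by
          rw [div_mul_eq_mul_div, le_div_iff₀ hsr]
          nlinarith
        linarith
      · have := hΦγ t h1.le
        have hsr1 : s ^ r ≤ 1 := Real.rpow_le_one hs0.le hs1 hr0.le
        have : γ * t ^ r ≤ (γ / s ^ r) * t ^ r := by
          apply mul_le_mul_of_nonneg_right _ htr
          rw [le_div_iff₀ hsr]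
          nlinarith
        linarith
  -- the constant
  set K : ℝ := (2 * γ) ^ (1/r) / s with hKdef
  have hKpos : 0 < K := by
    apply div_pos (Real.rpow_pos_of_pos (by linarith) _) hs0
  have hKr : K ^ r = 2 * γ / s ^ r := by
    rw [hKdef, Real.div_rpow (Real.rpow_nonneg (by linarith) _) hs0.le,
      ← Real.rpow_mul (by linarith : (0:ℝ) ≤ 2*γ), one_div_mul_cancel hrne, Real.rpow_one]
  have hγr : (0:ℝ) < γ ^ (1/r) := Real.rpow_pos_of_pos hγpos _
  refine ⟨K / γ ^ (1/r), div_pos hKpos hγr, ?_⟩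
  have hCK : K / γ ^ (1/r) * γ ^ (1/r) = K := div_mul_cancel₀ K (ne_of_gt hγr)
  rw [hCK]
  -- main estimate
  have main : ∀ (f : (Fin n → ℝ) → ℝ), Measurable f → ∀ Q : Cube n,
      ENNReal.ofReal (luxemburgNorm n Φ.toFun f Q) ≤ ENNReal.ofReal K * avgR n r f Q := by
    intro f hf Q
    set V := volume Q.set with hV
    have hV0 : V ≠ 0 := ne_of_gt Q.volume_pos_s15
    have hVtop : V ≠ ⊤ := Q.volume_ne_top
    set L := ∫⁻ x in Q.set, ENNReal.ofReal |f x| ^ r with hL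
    have hg : Measurable fun x => ENNReal.ofReal |f x| ^ r :=
      (ENNReal.measurable_ofReal.comp hf.abs).pow_const r
    have hA : avgR n r f Q = (V⁻¹ * L) ^ (1/r) := rfl
    set A := avgR n r f Q with hAdef
    rcases eq_or_ne A 0 with hA0 | hA0
    · -- f = 0 a.e. on Q, luxemburg norm is 0
      have hVL : V⁻¹ * L = 0 := by
        have h0 : (V⁻¹ * L) ^ (1/r) = 0 := hA.symm.trans hA0
        rcases ENNReal.rpow_eq_zero_iff.1 h0 with ⟨h1, _⟩ | ⟨_, h2⟩
        · exact h1
        · exfalso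
          have : (0:ℝ) < 1/r := by positivity
          linarith
      have hL0 : L = 0 := by
        rcases mul_eq_zero.1 hVL with h | h
        · exact absurd (ENNReal.inv_eq_zero.1 h) hVtop
        · exact h
      have hae : ∀ᵐ x ∂(volume.restrict Q.set), f x = 0 := by
        filter_upwards [(lintegral_eq_zero_iff hg).1 hL0] with x hx
        simp only [Pi.zero_apply] at hx
        have h1 : ENNReal.ofReal |f x| = 0 := by
          rcases ENNReal.rpow_eq_zero_iff.1 hx with ⟨h, _⟩ | ⟨h, _⟩
          · exact h
          · exact absurd h ENNReal.ofReal_ne_top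
        have h2 := ENNReal.ofReal_eq_zero.1 h1
        exact abs_eq_zero.1 (le_antisymm h2 (abs_nonneg _))
      have hlux : luxemburgNorm n Φ.toFun f Q = 0 := by
        have hset : {lam : ℝ | 0 < lam ∧
            (∫⁻ x in Q.set, ENNReal.ofReal (Φ.toFun (|f x| / lam))) ≤ volume Q.set}
            = Set.Ioi 0 := by
          ext lam
          simp only [Set.mem_setOf_eq, Set.mem_Ioi]
          constructor
          · exact fun h => h.1
          · intro hlam
            refine ⟨hlam, ?_⟩
            have : (∫⁻ x in Q.set, ENNReal.ofReal (Φ.toFun (|f x| / lam))) = 0 := by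
              rw [← lintegral_zero]
              apply lintegral_congr_ae
              filter_upwards [hae] with x hx
              simp [hx, Φ.zero]
            rw [this]
            exact zero_le
        rw [luxemburgNorm, hset, csInf_Ioi]
      rw [hlux]
      simp
    · rcases eq_or_ne A ⊤ with hAtop | hAtop
      · rw [hAtop, ENNReal.mul_top (ne_of_gt (ENNReal.ofReal_pos.2 hKpos))]
        exact le_top
      -- main case
      set a := A.toReal with hadef
      have ha0 : 0 < a := ENNReal.toReal_pos hA0 hAtop
      have haA : ENNReal.ofReal a = A := ENNReal.ofReal_toReal hAtop
      set lam := K * a with hlamdef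
      have hlam0 : 0 < lam := mul_pos hKpos ha0
      -- L = V * A^r
      have hAr : A ^ r = V⁻¹ * L := by
        rw [hA, ← ENNReal.rpow_mul, one_div_mul_cancel hrne, ENNReal.rpow_one]
      have hLVA : L = V * A ^ r := by
        rw [hAr, ← mul_assoc, ENNReal.mul_inv_cancel hV0 hVtop, one_mul]
      have hArtop : A ^ r ≠ ⊤ := ENNReal.rpow_ne_top_of_nonneg hr0.le hAtop
      have hAr0 : A ^ r ≠ 0 := by
        intro h
        rcases ENNReal.rpow_eq_zero_iff.1 h with ⟨h1, _⟩ | ⟨h1, h2⟩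
        · exact hA0 h1
        · exact hAtop h1
      -- membership of lam in the defining set
      have hmem : (∫⁻ x in Q.set, ENNReal.ofReal (Φ.toFun (|f x| / lam))) ≤ V := by
        have hpt : ∀ x, ENNReal.ofReal (Φ.toFun (|f x| / lam)) ≤
            ENNReal.ofReal (1/2) + (ENNReal.ofReal (γ / s ^ r) * (ENNReal.ofReal lam ^ r)⁻¹)
              * (ENNReal.ofReal |f x| ^ r) := by
          intro x
          set t := |f x| / lam with htdef
          have ht0 : 0 ≤ t := div_nonneg (abs_nonneg _) hlam0.le
          calc ENNReal.ofReal (Φ.toFun t)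
              ≤ ENNReal.ofReal (1/2 + (γ / s ^ r) * t ^ r) :=
                ENNReal.ofReal_le_ofReal (key t ht0)
            _ = ENNReal.ofReal (1/2) + ENNReal.ofReal ((γ / s ^ r) * t ^ r) := by
                rw [ENNReal.ofReal_add (by norm_num) (by positivity)]
            _ = ENNReal.ofReal (1/2) + ENNReal.ofReal (γ / s ^ r) * ENNReal.ofReal (t ^ r) := by
                rw [ENNReal.ofReal_mul (by positivity)]
            _ = ENNReal.ofReal (1/2) + (ENNReal.ofReal (γ / s ^ r) * (ENNReal.ofReal lam ^ r)⁻¹)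
                  * (ENNReal.ofReal |f x| ^ r) := by
                rw [← ENNReal.ofReal_rpow_of_nonneg ht0 hr0.le, htdef,
                  ENNReal.ofReal_div_of_pos hlam0,
                  ENNReal.div_rpow_of_nonneg _ _ hr0.le]
                simp only [div_eq_mul_inv]
                ring
        calc (∫⁻ x in Q.set, ENNReal.ofReal (Φ.toFun (|f x| / lam)))
            ≤ ∫⁻ x in Q.set, (ENNReal.ofReal (1/2) +
                (ENNReal.ofReal (γ / s ^ r) * (ENNReal.ofReal lam ^ r)⁻¹)
                  * (ENNReal.ofReal |f x| ^ r)) := lintegral_mono fun x => hpt x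
          _ = ENNReal.ofReal (1/2) * V +
                (ENNReal.ofReal (γ / s ^ r) * (ENNReal.ofReal lam ^ r)⁻¹) * L := by
              rw [lintegral_add_left measurable_const, lintegral_const,
                Measure.restrict_apply_univ, lintegral_const_mul _ hg]
          _ = ENNReal.ofReal (1/2) * V + ENNReal.ofReal (1/2) * V := by
              congr 1
              -- compute the second term
              have hlamr : ENNReal.ofReal lam ^ r = ENNReal.ofReal (K ^ r) * A ^ r := by
                rw [hlamdef, ENNReal.ofReal_mul hKpos.le,
                  ENNReal.mul_rpow_of_nonneg _ _ hr0.le, haA,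
                  ← ENNReal.ofReal_rpow_of_nonneg hKpos.le hr0.le]
              have hKrtop : ENNReal.ofReal (K ^ r) ≠ ⊤ := ENNReal.ofReal_ne_top
              have hKr0 : ENNReal.ofReal (K ^ r) ≠ 0 := by
                simp only [ne_eq, ENNReal.ofReal_eq_zero, not_le]
                exact Real.rpow_pos_of_pos hKpos r
              rw [hlamr, hLVA, ENNReal.mul_inv (Or.inl hKr0) (Or.inl hKrtop)]
              rw [show ENNReal.ofReal (γ / s ^ r) * ((ENNReal.ofReal (K ^ r))⁻¹ * (A ^ r)⁻¹)
                    * (V * A ^ r)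
                  = (ENNReal.ofReal (γ / s ^ r) * (ENNReal.ofReal (K ^ r))⁻¹)
                    * ((A ^ r)⁻¹ * A ^ r) * V by ring]
              rw [ENNReal.inv_mul_cancel hAr0 hArtop, mul_one]
              congr 1
              rw [← div_eq_mul_inv, ← ENNReal.ofReal_div_of_pos (Real.rpow_pos_of_pos hKpos r),
                hKr]
              congr 1
              rw [div_div_div_comm, div_self (ne_of_gt hsr), div_one]
              rw [eq_div_iff (by norm_num : (2:ℝ) ≠ 0)]
              field_simp
          _ = V := by
              rw [← add_mul, ← ENNReal.ofReal_add (by norm_num) (by norm_num)]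
              norm_num
      have hlux : luxemburgNorm n Φ.toFun f Q ≤ lam := by
        apply csInf_le
        · exact ⟨0, fun x hx => hx.1.le⟩
        · exact ⟨hlam0, hmem⟩
      calc ENNReal.ofReal (luxemburgNorm n Φ.toFun f Q)
          ≤ ENNReal.ofReal lam := ENNReal.ofReal_le_ofReal hlux
        _ = ENNReal.ofReal K * A := by
            rw [hlamdef, ENNReal.ofReal_mul hKpos.le, haA]
  refine ⟨main, ?_⟩
  intro f hf x
  rw [orliczMax]
  refine iSup₂_le fun Q hQ => ?_
  calc ENNReal.ofReal (luxemburgNorm n Φ.toFun f Q)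
      ≤ ENNReal.ofReal K * avgR n r f Q := main f hf Q
    _ ≤ ENNReal.ofReal K * maximalR n r f x := by
        apply mul_le_mul_right
        exact le_iSup₂ (f := fun (Q : Cube n) (_ : x ∈ Q.set) => avgR n r f Q) Q hQ
end
end
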